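/- arXiv:2212.01509 — 2 statements merged into one kernel-verified Lean document; each statement's English description precedes it below -/
import Mathlib

section
/- Let S be a finite state space, and let p, q : S → ℝ be two probability mass functions (p s ≥ 0 and q s ≥ 0 for all s, with ∑_s p s = 1 and ∑_s q s = 1). Let V : S → ℝ satisfy 0 ≤ V s ≤ M for all s ∈ S, with M > 0, and set δ = ∑_s |p s − q s|. Let γ₀, γ_k be real numbers with 0 < γ₀ < γ_k. If δ < (γ_k − γ₀) · (∑_s q s · V s) / (γ₀ · M), then γ_k · (∑_s q s · V s) − γ₀ · (∑_s p s · V s) ≥ (γ_k − γ₀) · (∑_s q s · V s) − γ₀ · δ · M > 0. -/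
/-- Theorem 1 of the paper (core quantitative form): for probability mass
functions `p = T₀(·|s,a)` and `q = T_k(·|s,a)` on a finite state space,
a value function `V` with `0 ≤ V s ≤ M`, `M > 0`, total variation
`δ = ∑ s, |p s - q s|`, and discount factors `0 < γ₀ < γ_k`, if
`δ < (γ_k - γ₀) * E_q[V] / (γ₀ * M)` then
`γ_k * E_q[V] - γ₀ * E_p[V] ≥ (γ_k - γ₀) * E_q[V] - γ₀ * δ * M > 0`. -/
theorem crsfd_positive_shaped_reward {S : Type*} [Fintype S]
    (p q V : S → ℝ) (M δ γ₀ γk : ℝ)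
    (hp_nonneg : ∀ s, 0 ≤ p s) (hq_nonneg : ∀ s, 0 ≤ q s)
    (hp_sum : ∑ s, p s = 1) (hq_sum : ∑ s, q s = 1)
    (hV_nonneg : ∀ s, 0 ≤ V s) (hV_le : ∀ s, V s ≤ M) (hM : 0 < M)
    (hδ : δ = ∑ s, |p s - q s|)
    (hγ₀ : 0 < γ₀) (hγ : γ₀ < γk)
    (hδ_small : δ < (γk - γ₀) * (∑ s, q s * V s) / (γ₀ * M)) :
    γk * (∑ s, q s * V s) - γ₀ * (∑ s, p s * V s) ≥
        (γk - γ₀) * (∑ s, q s * V s) - γ₀ * δ * M ∧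
      (γk - γ₀) * (∑ s, q s * V s) - γ₀ * δ * M > 0 := by
  have key : ∑ s, p s * V s - ∑ s, q s * V s ≤ δ * M := by
    rw [← Finset.sum_sub_distrib, hδ, Finset.sum_mul]
    apply Finset.sum_le_sum
    intro s _
    have h1 : p s * V s - q s * V s = (p s - q s) * V s := by ring
    rw [h1]
    calc (p s - q s) * V s ≤ |p s - q s| * V s := by
          apply mul_le_mul_of_nonneg_right (le_abs_self _) (hV_nonneg s)
      _ ≤ |p s - q s| * M := by
          apply mul_le_mul_of_nonneg_left (hV_le s) (abs_nonneg _)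
  have h2 : δ * (γ₀ * M) < (γk - γ₀) * (∑ s, q s * V s) :=
    (lt_div_iff₀ (by positivity)).mp hδ_small
  constructor
  · nlinarith
  · nlinarith
end

section
/- Let S be a finite state space, s ∈ S a fixed state, and let p, q : S → ℝ be two probability mass functions (p s' ≥ 0 and q s' ≥ 0 for all s', with ∑_{s'} p s' = 1 and ∑_{s'} q s' = 1). Let V : S → ℝ satisfy 0 ≤ V s' ≤ M for all s' ∈ S with M > 0, and suppose V satisfies the Bellman relation V s = γ₀ · ∑_{s'} p s' · V s' for real numbers 0 < γ₀ < γ_k. Set δ = ∑_{s'} |p s' − q s'|. If δ < (γ_k − γ₀) · (∑_{s'} q s' · V s') / (γ₀ · M), then the shaped reward γ_k · (∑_{s'} q s' · V s') − V s is strictly positive. -/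
/-- Theorem 1 of the paper stated via the shaped reward: if the expert value
function `V` satisfies the Bellman relation `V s = γ₀ * ∑ s', p s' * V s'`
where `p = T₀(·|s,a)`, and the total variation `δ = ∑ s', |p s' - q s'|`
between the original and new kernels is small enough, then the expected
shaped reward `γ_k * ∑ s', q s' * V s' - V s` in the new task is strictly
positive. -/
theorem crsfd_shaped_reward_pos {S : Type*} [Fintype S] (s : S)
    (p q V : S → ℝ) (M δ γ₀ γk : ℝ)
    (hp_nonneg : ∀ s', 0 ≤ p s') (hq_nonneg : ∀ s', 0 ≤ q s')
    (hp_sum : ∑ s', p s' = 1) (hq_sum : ∑ s', q s' = 1)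
    (hV_nonneg : ∀ s', 0 ≤ V s') (hV_le : ∀ s', V s' ≤ M) (hM : 0 < M)
    (hγ₀ : 0 < γ₀) (hγ : γ₀ < γk)
    (hBellman : V s = γ₀ * ∑ s', p s' * V s')
    (hδ : δ = ∑ s', |p s' - q s'|)
    (hδ_small : δ < (γk - γ₀) * (∑ s', q s' * V s') / (γ₀ * M)) :
    0 < γk * (∑ s', q s' * V s') - V s := by
  set P := ∑ s', p s' * V s' with hP
  set Q := ∑ s', q s' * V s' with hQ
  have hQ0 : 0 ≤ Q := Finset.sum_nonneg fun i _ => mul_nonneg (hq_nonneg i) (hV_nonneg i)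
  have hPQ : P - Q ≤ δ * M := by
    rw [hδ, Finset.sum_mul]
    rw [hP, hQ, ← Finset.sum_sub_distrib]
    apply Finset.sum_le_sum
    intro i _
    rw [← sub_mul]
    calc (p i - q i) * V i ≤ |p i - q i| * V i :=
          mul_le_mul_of_nonneg_right (le_abs_self _) (hV_nonneg i)
      _ ≤ |p i - q i| * M := mul_le_mul_of_nonneg_left (hV_le i) (abs_nonneg _)
  have key : δ * (γ₀ * M) < (γk - γ₀) * Q := by
    have := (lt_div_iff₀ (by positivity : (0:ℝ) < γ₀ * M)).mp hδ_small
    linarith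
  rw [hBellman]
  nlinarith [mul_le_mul_of_nonneg_left hPQ hγ₀.le]
end
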